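/- Let B ∈ ℝ^{N×K} and F ∈ ℝ^{T×K} with A = B Fᵀ. Then ‖A‖_* ≤ (1/2)(‖B‖_F² + ‖F‖_F²), with equality achieved when B = U D^{1/2} and F = V D^{1/2} where A = U D Vᵀ is a compact singular value decomposition of A. -/

import Mathlib

open Matrix

noncomputable def frobNorm {m n : Type*} [Fintype m] [Fintype n] (A : Matrix m n ℝ) : ℝ :=
  Real.sqrt (∑ i, ∑ j, (A i j) ^ 2)

/-- The nuclear norm of a real matrix: the sum of its singular values. -/
noncomputable def nuclearNorm {m n : Type*} [Fintype m] [Fintype n] [DecidableEq n]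
    (A : Matrix m n ℝ) : ℝ :=
  ∑ i, Real.sqrt ((show (Aᵀ * A).IsHermitian from Matrix.isHermitian_conjTranspose_mul_self A).eigenvalues i)

section aux

variable {m n : Type*} [Fintype m] [Fintype n]

lemma trace_tmul (X Y : Matrix m n ℝ) :
    (Xᵀ * Y).trace = ∑ i, ∑ j, X i j * Y i j := by
  simp only [Matrix.trace, Matrix.diag, Matrix.mul_apply, Matrix.transpose_apply]
  exact Finset.sum_comm

lemma frob_sq (A : Matrix m n ℝ) : frobNorm A ^ 2 = (Aᵀ * A).trace := by
  rw [frobNorm, Real.sq_sqrt (by positivity), trace_tmul]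
  simp [sq]

lemma trace_tmul_self_nonneg (A : Matrix m n ℝ) : 0 ≤ (Aᵀ * A).trace := by
  rw [trace_tmul]
  apply Finset.sum_nonneg; intro i _
  apply Finset.sum_nonneg; intro j _
  exact mul_self_nonneg _

lemma inv_sqrt_mul_self {x : ℝ} (hx : 0 ≤ x) : (Real.sqrt x)⁻¹ * x = Real.sqrt x := by
  rcases eq_or_lt_of_le hx with h | h
  · simp [← h]
  · have hs : Real.sqrt x ≠ 0 := by positivity
    field_simp
    rw [Real.sq_sqrt hx]

lemma nuclearNorm_eq_trace [DecidableEq n] (A : Matrix m n ℝ) (S : Matrix n n ℝ)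
    (hS : S.PosSemidef) (hSS : S ^ 2 = Aᵀ * A) : nuclearNorm A = S.trace := by
  have hconj : Aᴴ = Aᵀ := Matrix.conjTranspose_eq_transpose_of_trivial A
  have hM : (Aᴴ * A).PosSemidef := Matrix.posSemidef_conjTranspose_mul_self A
  have hsqrt : S = hM.1.cfc Real.sqrt := by
    open scoped MatrixOrder in
    rw [← hM.1.cfc_eq, ← cfcₙ_eq_cfc, ← CFC.sqrt_eq_real_sqrt _ hM.nonneg]
    exact (CFC.sqrt_unique (by rw [← sq, hSS, hconj]) hS.nonneg).symm
  rw [hsqrt, Matrix.IsHermitian.cfc, Unitary.conjStarAlgAut_apply]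
  rw [Matrix.trace_mul_cycle]
  have hWW : (star hM.1.eigenvectorUnitary.1 : Matrix n n ℝ) * hM.1.eigenvectorUnitary.1 = 1 :=
    hM.1.eigenvectorUnitary.2.1
  rw [hWW, one_mul, Matrix.trace_diagonal]
  simp [nuclearNorm]

end aux

/-- For any factorization `A = B Fᵀ`, `‖A‖_* ≤ ½(‖B‖_F² + ‖F‖_F²)`; equality is achieved
with `B = U D^{1/2}`, `F = V D^{1/2}` for a compact SVD `A = U D Vᵀ`. -/
theorem stmt6 {N T K : ℕ} (A : Matrix (Fin N) (Fin T) ℝ)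
    (B : Matrix (Fin N) (Fin K) ℝ) (F : Matrix (Fin T) (Fin K) ℝ) (hA : A = B * Fᵀ) :
    nuclearNorm A ≤ (1 / 2) * (frobNorm B ^ 2 + frobNorm F ^ 2) ∧
    ∀ (U : Matrix (Fin N) (Fin K) ℝ) (V : Matrix (Fin T) (Fin K) ℝ) (dv : Fin K → ℝ),
      Uᵀ * U = 1 → Vᵀ * V = 1 → (∀ r, 0 ≤ dv r) →
      A = U * Matrix.diagonal dv * Vᵀ →
      nuclearNorm A = (1 / 2) *
        (frobNorm (U * Matrix.diagonal fun r => Real.sqrt (dv r)) ^ 2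
          + frobNorm (V * Matrix.diagonal fun r => Real.sqrt (dv r)) ^ 2) := by
  constructor
  · -- inequality part
    have hconj : Aᴴ = Aᵀ := Matrix.conjTranspose_eq_transpose_of_trivial A
    set hM := Matrix.isHermitian_conjTranspose_mul_self A with hMdef
    set lam : Fin T → ℝ := hM.eigenvalues with hlam
    have hlam0 : ∀ i, 0 ≤ lam i := fun i =>
      (Matrix.posSemidef_conjTranspose_mul_self A).eigenvalues_nonneg i
    set W : Matrix (Fin T) (Fin T) ℝ := hM.eigenvectorUnitary.1 with hWdef
    have hWW : Wᵀ * W = 1 := by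
      have h := (Matrix.mem_unitaryGroup_iff').mp hM.eigenvectorUnitary.2
      simp only [Matrix.star_eq_conjTranspose, Matrix.conjTranspose_eq_transpose_of_trivial] at h
      exact h
    have hWW' : W * Wᵀ = 1 := by
      have h := (Matrix.mem_unitaryGroup_iff).mp hM.eigenvectorUnitary.2
      simp only [Matrix.star_eq_conjTranspose, Matrix.conjTranspose_eq_transpose_of_trivial] at h
      exact h
    have hGT : Aᵀ * A = W * Matrix.diagonal lam * Wᵀ := by
      have h := hM.spectral_theorem
      simp only [Matrix.star_eq_conjTranspose, Matrix.conjTranspose_eq_transpose_of_trivial,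
        RCLike.ofReal_real_eq_id, Function.id_comp] at h
      rw [← hconj]
      exact h
    set Sp : Matrix (Fin T) (Fin T) ℝ := Matrix.diagonal (fun i => (Real.sqrt (lam i))⁻¹)
      with hSpdef
    set U' : Matrix (Fin N) (Fin T) ℝ := A * W * Sp with hU'def
    have hSpT : Spᵀ = Sp := by rw [hSpdef]; exact Matrix.diagonal_transpose _
    have hU'T : U'ᵀ = Sp * (Wᵀ * Aᵀ) := by
      rw [hU'def]
      simp only [Matrix.transpose_mul, hSpT, Matrix.mul_assoc]
    have e2 : U'ᵀ * (A * W) = Matrix.diagonal (fun i => Real.sqrt (lam i)) := by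
      rw [hU'T]
      have h1 : Sp * (Wᵀ * Aᵀ) * (A * W) = Sp * (Wᵀ * (Aᵀ * A * W)) := by
        simp only [Matrix.mul_assoc]
      rw [h1, hGT]
      have h3 : Wᵀ * (W * Matrix.diagonal lam * Wᵀ * W) = Wᵀ * W * Matrix.diagonal lam * (Wᵀ * W) := by
        simp only [Matrix.mul_assoc]
      rw [h3, hWW, Matrix.one_mul, Matrix.mul_one, hSpdef, Matrix.diagonal_mul_diagonal]
      have h4 : (fun i => (Real.sqrt (lam i))⁻¹ * lam i) = fun i => Real.sqrt (lam i) :=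
        funext fun i => inv_sqrt_mul_self (hlam0 i)
      rw [h4]
    have hnn : nuclearNorm A = (U'ᵀ * (A * W)).trace := by
      rw [e2, Matrix.trace_diagonal]
      rfl
    set X : Matrix (Fin K) (Fin T) ℝ := Bᵀ * U' with hXdef
    set Y : Matrix (Fin K) (Fin T) ℝ := Fᵀ * W with hYdef
    have hXY : (U'ᵀ * (A * W)).trace = (Xᵀ * Y).trace := by
      rw [hXdef, hYdef, hA]
      simp only [Matrix.transpose_mul, Matrix.transpose_transpose, Matrix.mul_assoc]
    have hamgm : (Xᵀ * Y).trace ≤ (1/2) * ((Xᵀ * X).trace + (Yᵀ * Y).trace) := by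
      rw [trace_tmul, trace_tmul, trace_tmul]
      calc ∑ i, ∑ j, X i j * Y i j
          ≤ ∑ i, ∑ j, (1/2) * (X i j * X i j + Y i j * Y i j) := by
            refine Finset.sum_le_sum fun i _ => Finset.sum_le_sum fun j _ => ?_
            nlinarith [sq_nonneg (X i j - Y i j)]
        _ = (1/2) * ((∑ i, ∑ j, X i j * X i j) + ∑ i, ∑ j, Y i j * Y i j) := by
            simp only [← Finset.sum_add_distrib, Finset.mul_sum]
    have hYtr : (Yᵀ * Y).trace = frobNorm F ^ 2 := by
      rw [frob_sq, hYdef]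
      have h4 : (Fᵀ * W)ᵀ * (Fᵀ * W) = Wᵀ * (F * (Fᵀ * W)) := by
        simp only [Matrix.transpose_mul, Matrix.transpose_transpose, Matrix.mul_assoc]
      rw [h4, Matrix.trace_mul_comm]
      have h5 : F * (Fᵀ * W) * Wᵀ = F * Fᵀ * (W * Wᵀ) := by simp only [Matrix.mul_assoc]
      rw [h5, hWW', Matrix.mul_one, Matrix.trace_mul_comm]
    have hUJ : U'ᵀ * U' = Matrix.diagonal (fun i => Real.sqrt (lam i) * (Real.sqrt (lam i))⁻¹) := by
      have h6 : U'ᵀ * U' = U'ᵀ * (A * W) * Sp := by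
        rw [hU'def]; simp only [Matrix.mul_assoc]
      rw [h6, e2, hSpdef, Matrix.diagonal_mul_diagonal]
    have hUJ2 : U' * (U'ᵀ * U') = U' := by
      rw [hUJ]
      conv_lhs => rw [hU'def]
      have h7 : A * W * Sp * Matrix.diagonal (fun i => Real.sqrt (lam i) * (Real.sqrt (lam i))⁻¹)
          = A * W * (Sp * Matrix.diagonal (fun i => Real.sqrt (lam i) * (Real.sqrt (lam i))⁻¹)) := by
        simp only [Matrix.mul_assoc]
      rw [h7, hSpdef, Matrix.diagonal_mul_diagonal]
      have h8 : (fun i => (Real.sqrt (lam i))⁻¹ * (Real.sqrt (lam i) * (Real.sqrt (lam i))⁻¹))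
          = fun i => (Real.sqrt (lam i))⁻¹ := by
        funext i
        by_cases h : Real.sqrt (lam i) = 0
        · simp [h]
        · rw [mul_inv_cancel₀ h, mul_one]
      rw [h8, hU'def]
    have hRR : U' * U'ᵀ * (U' * U'ᵀ) = U' * U'ᵀ := by
      calc U' * U'ᵀ * (U' * U'ᵀ) = U' * (U'ᵀ * U') * U'ᵀ := by simp only [Matrix.mul_assoc]
        _ = U' * U'ᵀ := by rw [hUJ2]
    set Q : Matrix (Fin N) (Fin N) ℝ := 1 - U' * U'ᵀ with hQdef
    have hQT : Qᵀ = Q := by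
      rw [hQdef]
      simp [Matrix.transpose_sub, Matrix.transpose_mul, Matrix.transpose_transpose]
    have hQQ : Q * Q = Q := by
      rw [hQdef]
      simp only [Matrix.sub_mul, Matrix.mul_sub, Matrix.one_mul, Matrix.mul_one, hRR]
      abel
    have hXtr : (Xᵀ * X).trace ≤ frobNorm B ^ 2 := by
      rw [frob_sq]
      have e5 : (Bᵀ * Q)ᵀ * (Bᵀ * Q) = Q * (B * (Bᵀ * Q)) := by
        rw [Matrix.transpose_mul, Matrix.transpose_transpose, hQT]
        simp only [Matrix.mul_assoc]
      have e6 : (Q * (B * (Bᵀ * Q))).trace = (B * Bᵀ * Q).trace := by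
        rw [Matrix.trace_mul_comm]
        have : B * (Bᵀ * Q) * Q = B * Bᵀ * (Q * Q) := by simp only [Matrix.mul_assoc]
        rw [this, hQQ]
      have e7 : (B * Bᵀ * Q).trace = (Bᵀ * B).trace - (Xᵀ * X).trace := by
        rw [hQdef, Matrix.mul_sub, Matrix.mul_one, Matrix.trace_sub]
        congr 1
        · exact Matrix.trace_mul_comm B Bᵀ
        · have a1 : B * Bᵀ * (U' * U'ᵀ) = B * (Bᵀ * U') * U'ᵀ := by
            simp only [Matrix.mul_assoc]
          rw [a1, Matrix.trace_mul_comm]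
          have hXX : Xᵀ * X = U'ᵀ * (B * (Bᵀ * U')) := by
            rw [hXdef, Matrix.transpose_mul (Bᵀ) U', Matrix.transpose_transpose]
            simp only [Matrix.mul_assoc]
          rw [hXX]
      have hge := trace_tmul_self_nonneg (Bᵀ * Q)
      rw [e5, e6, e7] at hge
      linarith
    calc nuclearNorm A = (Xᵀ * Y).trace := by rw [hnn, hXY]
      _ ≤ (1/2) * ((Xᵀ * X).trace + (Yᵀ * Y).trace) := hamgm
      _ ≤ (1/2) * (frobNorm B ^ 2 + frobNorm F ^ 2) := by rw [hYtr]; linarith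

  · intro U V dv hU hV hdv hAsvd
    set Dv : Matrix (Fin K) (Fin K) ℝ := Matrix.diagonal dv with hDv
    set Dh : Matrix (Fin K) (Fin K) ℝ := Matrix.diagonal (fun r => Real.sqrt (dv r)) with hDh
    have hDhT : Dhᵀ = Dh := Matrix.diagonal_transpose _
    have hDvT : Dvᵀ = Dv := Matrix.diagonal_transpose _
    have hDhDh : Dh * Dh = Dv := by
      rw [hDh, hDv, Matrix.diagonal_mul_diagonal]
      have : (fun i => Real.sqrt (dv i) * Real.sqrt (dv i)) = dv :=
        funext fun r => Real.mul_self_sqrt (hdv r)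
      rw [this]
    set S : Matrix (Fin T) (Fin T) ℝ := V * Dv * Vᵀ with hSdef
    have hSfac : S = (V * Dh) * (V * Dh)ᵀ := by
      rw [hSdef, Matrix.transpose_mul, hDhT, ← hDhDh]
      simp only [Matrix.mul_assoc]
    have hSps : S.PosSemidef := by
      rw [hSfac, ← Matrix.conjTranspose_eq_transpose_of_trivial]
      exact Matrix.posSemidef_self_mul_conjTranspose _
    have hSsq : S ^ 2 = Aᵀ * A := by
      rw [sq, hSdef, hAsvd]
      have h1 : V * Dv * Vᵀ * (V * Dv * Vᵀ) = V * Dv * (Vᵀ * V) * Dv * Vᵀ := by simp only [Matrix.mul_assoc]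
      have h2 : (U * Dv * Vᵀ)ᵀ * (U * Dv * Vᵀ) = V * Dv * (Uᵀ * U) * Dv * Vᵀ := by
        simp only [Matrix.transpose_mul, Matrix.transpose_transpose, hDvT]; simp only [Matrix.mul_assoc]
      rw [h1, h2, hU, hV]
    have htr : nuclearNorm A = ∑ r, dv r := by
      rw [nuclearNorm_eq_trace A S hSps hSsq, hSdef, Matrix.trace_mul_cycle, hV,
        Matrix.one_mul, hDv, Matrix.trace_diagonal]
    have hfU : frobNorm (U * Dh) ^ 2 = ∑ r, dv r := by
      rw [frob_sq]
      have : (U * Dh)ᵀ * (U * Dh) = Dh * (Uᵀ * U) * Dh := by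
        simp only [Matrix.transpose_mul, hDhT]; simp only [Matrix.mul_assoc]
      rw [this, hU, Matrix.mul_one, hDhDh, hDv, Matrix.trace_diagonal]
      
    have hfV : frobNorm (V * Dh) ^ 2 = ∑ r, dv r := by
      rw [frob_sq]
      have : (V * Dh)ᵀ * (V * Dh) = Dh * (Vᵀ * V) * Dh := by
        simp only [Matrix.transpose_mul, hDhT]; simp only [Matrix.mul_assoc]
      rw [this, hV, Matrix.mul_one, hDhDh, hDv, Matrix.trace_diagonal]
    rw [htr, hfU, hfV]; ring
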